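/- (Lyapunov norms for strong nonuniform polynomial dichotomy) An evolution family T(t,τ) admits a strong nonuniform polynomial dichotomy (a nonuniform polynomial dichotomy together with ∥T(t,τ)∥ ≤ K(t/τ)^b τ^ε for t ≥ τ, some K, b > 0) if and only if it admits a polynomial dichotomy with respect to a family of norms ∥·∥_t satisfying both ∥x∥ ≤ ∥x∥_t ≤ Ct^ε∥x∥ and the polynomial bounded growth ∥T(t,s)x∥_t ≤ M(t/s)^a∥x∥_s for t ≥ s ≥ 1, for some constants C, M, a > 0 and ε ≥ 0. -/

import Mathlib

open Set

open Pointwise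

variable {X : Type*} [NormedAddCommGroup X] [NormedSpace ℝ X] [CompleteSpace X]

/-- Evolution family on `[1,∞)`. -/
def IsEvolutionFamily (T : ℝ → ℝ → X →L[ℝ] X) : Prop :=
  (∀ t : ℝ, 1 ≤ t → T t t = ContinuousLinearMap.id ℝ X) ∧
  (∀ τ s t : ℝ, 1 ≤ τ → τ ≤ s → s ≤ t → (T t s).comp (T s τ) = T t τ) ∧
  ∀ τ : ℝ, 1 ≤ τ → ∀ x : X, ContinuousOn (fun s => T s τ x) (Ici τ)

/-- A family of norms `N t` equivalent to `∥·∥` with constants `C, ε`: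
`∥x∥ ≤ ∥x∥_t ≤ C t^ε ∥x∥`. -/
def IsNormFamily (N : ℝ → X → ℝ) (C ε : ℝ) : Prop :=
  (∀ t : ℝ, ∀ x y : X, N t (x + y) ≤ N t x + N t y) ∧
  (∀ t : ℝ, ∀ a : ℝ, ∀ x : X, N t (a • x) = |a| * N t x) ∧
  ∀ t : ℝ, ∀ x : X, 1 ≤ t → ‖x‖ ≤ N t x ∧ N t x ≤ C * t ^ ε * ‖x‖

/-- Polynomial dichotomy with respect to a family of norms `N t`: projections `P`
commuting with the dynamics, invertible on the kernels, contraction rate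
`D(t/τ)^{-λ}` on `Im P(τ)` and expansion rate `D⁻¹(t/τ)^{λ}` on `Ker P(τ)`
(the latter being the forward reformulation of
`∥T(t,τ)Q(τ)x∥_t ≤ D(τ/t)^{-λ}∥x∥_τ` for `t ≤ τ`). -/
def PolyDichotomyWrt (T : ℝ → ℝ → X →L[ℝ] X) (N : ℝ → X → ℝ) : Prop :=
  ∃ P : ℝ → X →L[ℝ] X, ∃ D lam : ℝ, 0 < D ∧ 0 < lam ∧
    (∀ t : ℝ, 1 ≤ t → (P t).comp (P t) = P t) ∧
    (∀ τ t : ℝ, 1 ≤ τ → τ ≤ t → (P t).comp (T t τ) = (T t τ).comp (P τ)) ∧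
    (∀ τ t : ℝ, 1 ≤ τ → τ ≤ t →
      Set.BijOn (⇑(T t τ)) {v : X | P τ v = 0} {v : X | P t v = 0}) ∧
    (∀ τ t : ℝ, 1 ≤ τ → τ ≤ t → ∀ x : X,
      N t (T t τ (P τ x)) ≤ D * (t / τ) ^ (-lam) * N τ x) ∧
    (∀ τ t : ℝ, 1 ≤ τ → τ ≤ t → ∀ v : X, P τ v = 0 →
      D⁻¹ * (t / τ) ^ lam * N τ v ≤ N t (T t τ v))

/-- Nonuniform polynomial dichotomy: `∥T(t,τ)P(τ)∥ ≤ D(t/τ)^{-λ}τ^ε` for `t ≥ τ` and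
`∥T(t,τ)Q(τ)∥ ≤ D(τ/t)^{-λ}τ^ε` for `t ≤ τ` (here stated in the equivalent forward
form `∥T(t,τ)v∥ ≥ D⁻¹(t/τ)^{λ}t^{-ε}∥v∥` for `v ∈ Ker P(τ)`, `t ≥ τ`). -/
def NonuniformPolyDichotomy (T : ℝ → ℝ → X →L[ℝ] X) : Prop :=
  ∃ P : ℝ → X →L[ℝ] X, ∃ D lam ε : ℝ, 0 < D ∧ 0 < lam ∧ 0 ≤ ε ∧
    (∀ t : ℝ, 1 ≤ t → (P t).comp (P t) = P t) ∧
    (∀ τ t : ℝ, 1 ≤ τ → τ ≤ t → (P t).comp (T t τ) = (T t τ).comp (P τ)) ∧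
    (∀ τ t : ℝ, 1 ≤ τ → τ ≤ t →
      Set.BijOn (⇑(T t τ)) {v : X | P τ v = 0} {v : X | P t v = 0}) ∧
    (∀ τ t : ℝ, 1 ≤ τ → τ ≤ t → ∀ x : X,
      ‖T t τ (P τ x)‖ ≤ D * (t / τ) ^ (-lam) * τ ^ ε * ‖x‖) ∧
    (∀ τ t : ℝ, 1 ≤ τ → τ ≤ t → ∀ v : X, P τ v = 0 →
      D⁻¹ * (t / τ) ^ lam * t ^ (-ε) * ‖v‖ ≤ ‖T t τ v‖)
/-- Strong nonuniform polynomial dichotomy: a nonuniform polynomial dichotomy together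
with the growth bound `∥T(t,τ)∥ ≤ K(t/τ)^b τ^ε` for `t ≥ τ`. -/
def StrongNonuniformPolyDichotomy (T : ℝ → ℝ → X →L[ℝ] X) : Prop :=
  NonuniformPolyDichotomy T ∧
    ∃ K b ε : ℝ, 0 < K ∧ 0 < b ∧ 0 ≤ ε ∧
      ∀ τ t : ℝ, 1 ≤ τ → τ ≤ t → ∀ x : X, ‖T t τ x‖ ≤ K * (t / τ) ^ b * τ ^ ε * ‖x‖


/-- helper: scaling of `sSup` of an image of a nonneg-scaled function. -/
theorem mul_sSup_image' {α : Type*} {c : ℝ} (hc : 0 ≤ c) (f g : α → ℝ) (S : Set α)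
    (hfg : ∀ t ∈ S, f t = c * g t) :
    sSup (f '' S) = c * sSup (g '' S) := by
  have h1 : f '' S = c • (g '' S) := by
    rw [← Set.image_smul, Set.image_image]
    exact Set.image_congr hfg
  rw [h1, Real.sSup_smul_of_nonneg hc, smul_eq_mul]

set_option maxHeartbeats 1600000 in
private theorem fwd_main
    (T : ℝ → ℝ → X →L[ℝ] X)
    (hid : ∀ t : ℝ, 1 ≤ t → T t t = ContinuousLinearMap.id ℝ X)
    (hco : ∀ τ s t : ℝ, 1 ≤ τ → τ ≤ s → s ≤ t → (T t s).comp (T s τ) = T t τ)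
    (P : ℝ → X →L[ℝ] X) (D lam ε₁ : ℝ) (hD : 0 < D) (hlam : 0 < lam) (hε₁ : 0 ≤ ε₁)
    (hPP : ∀ t : ℝ, 1 ≤ t → (P t).comp (P t) = P t)
    (hPT : ∀ τ t : ℝ, 1 ≤ τ → τ ≤ t → (P t).comp (T t τ) = (T t τ).comp (P τ))
    (hbij : ∀ τ t : ℝ, 1 ≤ τ → τ ≤ t →
      Set.BijOn (⇑(T t τ)) {v : X | P τ v = 0} {v : X | P t v = 0})
    (hS : ∀ τ t : ℝ, 1 ≤ τ → τ ≤ t → ∀ x : X,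
      ‖T t τ (P τ x)‖ ≤ D * (t / τ) ^ (-lam) * τ ^ ε₁ * ‖x‖)
    (hU : ∀ τ t : ℝ, 1 ≤ τ → τ ≤ t → ∀ v : X, P τ v = 0 →
      D⁻¹ * (t / τ) ^ lam * t ^ (-ε₁) * ‖v‖ ≤ ‖T t τ v‖)
    (K b ε₂ : ℝ) (hK : 0 < K) (hb : 0 < b) (hε₂ : 0 ≤ ε₂)
    (hG : ∀ τ t : ℝ, 1 ≤ τ → τ ≤ t → ∀ x : X, ‖T t τ x‖ ≤ K * (t / τ) ^ b * τ ^ ε₂ * ‖x‖) :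
    ∃ N : ℝ → X → ℝ, ∃ C M a ε : ℝ, 0 < C ∧ 0 < M ∧ 0 < a ∧ 0 ≤ ε ∧
      IsNormFamily N C ε ∧
      (∀ s t : ℝ, 1 ≤ s → s ≤ t → ∀ x : X, N t (T t s x) ≤ M * (t / s) ^ a * N s x) ∧
      PolyDichotomyWrt T N := by
  classical
  set ε : ℝ := max ε₁ ε₂ with hεdef
  have hε : 0 ≤ ε := le_trans hε₁ (le_max_left _ _)
  have hpos : ∀ u : ℝ, 1 ≤ u → (0:ℝ) < u := fun u hu => lt_of_lt_of_le one_pos hu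
  -- pointwise versions of operator identities
  have hidx : ∀ t : ℝ, 1 ≤ t → ∀ x : X, T t t x = x := by
    intro t ht x; rw [hid t ht]; rfl
  have hTTx : ∀ τ s t : ℝ, 1 ≤ τ → τ ≤ s → s ≤ t → ∀ x : X, T t s (T s τ x) = T t τ x := by
    intro τ s t h1 h2 h3 x
    calc T t s (T s τ x) = ((T t s).comp (T s τ)) x := rfl
      _ = T t τ x := by rw [hco τ s t h1 h2 h3]
  have hPx : ∀ t : ℝ, 1 ≤ t → ∀ x : X, P t (P t x) = P t x := by
    intro t ht x
    calc P t (P t x) = ((P t).comp (P t)) x := rfl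
      _ = P t x := by rw [hPP t ht]
  have hPTx : ∀ τ t : ℝ, 1 ≤ τ → τ ≤ t → ∀ x : X, P t (T t τ x) = T t τ (P τ x) := by
    intro τ t h1 h2 x
    calc P t (T t τ x) = ((P t).comp (T t τ)) x := rfl
      _ = ((T t τ).comp (P τ)) x := by rw [hPT τ t h1 h2]
      _ = T t τ (P τ x) := rfl
  have hQker : ∀ τ : ℝ, 1 ≤ τ → ∀ x : X, P τ (x - P τ x) = 0 := by
    intro τ hτ x; rw [map_sub, hPx τ hτ, sub_self]
  have hTker : ∀ τ t : ℝ, 1 ≤ τ → τ ≤ t → ∀ v : X, P τ v = 0 → P t (T t τ v) = 0 := by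
    intro τ t h1 h2 v hv; rw [hPTx τ t h1 h2, hv, map_zero]
  -- normalized estimates with ε = max ε₁ ε₂
  have hS' : ∀ τ t : ℝ, 1 ≤ τ → τ ≤ t → ∀ x : X,
      ‖T t τ (P τ x)‖ ≤ D * (t / τ) ^ (-lam) * τ ^ ε * ‖x‖ := by
    intro τ t h1 h2 x
    refine (hS τ t h1 h2 x).trans ?_
    have he : τ ^ ε₁ ≤ τ ^ ε := Real.rpow_le_rpow_of_exponent_le h1 (le_max_left _ _)
    have h0 : (0:ℝ) < t / τ := div_pos (hpos t (h1.trans h2)) (hpos τ h1)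
    exact mul_le_mul_of_nonneg_right
      (mul_le_mul_of_nonneg_left he (mul_nonneg hD.le (Real.rpow_nonneg h0.le _)))
      (norm_nonneg x)
  have hU' : ∀ τ t : ℝ, 1 ≤ τ → τ ≤ t → ∀ v : X, P τ v = 0 →
      D⁻¹ * (t / τ) ^ lam * t ^ (-ε) * ‖v‖ ≤ ‖T t τ v‖ := by
    intro τ t h1 h2 v hv
    refine le_trans ?_ (hU τ t h1 h2 v hv)
    have he : t ^ (-ε) ≤ t ^ (-ε₁) :=
      Real.rpow_le_rpow_of_exponent_le (h1.trans h2) (neg_le_neg (le_max_left _ _))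
    have h0 : (0:ℝ) < t / τ := div_pos (hpos t (h1.trans h2)) (hpos τ h1)
    exact mul_le_mul_of_nonneg_right
      (mul_le_mul_of_nonneg_left he
        (mul_nonneg (inv_nonneg.2 hD.le) (Real.rpow_nonneg h0.le _)))
      (norm_nonneg v)
  have hG' : ∀ τ t : ℝ, 1 ≤ τ → τ ≤ t → ∀ x : X,
      ‖T t τ x‖ ≤ K * (t / τ) ^ b * τ ^ ε * ‖x‖ := by
    intro τ t h1 h2 x
    refine (hG τ t h1 h2 x).trans ?_
    have he : τ ^ ε₂ ≤ τ ^ ε := Real.rpow_le_rpow_of_exponent_le h1 (le_max_right _ _)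
    have h0 : (0:ℝ) < t / τ := div_pos (hpos t (h1.trans h2)) (hpos τ h1)
    exact mul_le_mul_of_nonneg_right
      (mul_le_mul_of_nonneg_left he (mul_nonneg hK.le (Real.rpow_nonneg h0.le _)))
      (norm_nonneg x)
  -- the inverse of T τ s on kernels
  have hwex : ∀ s τ : ℝ, ∀ y : X, ∃ w : X,
      (1 ≤ s → s ≤ τ → P τ y = 0 → P s w = 0 ∧ T τ s w = y) := by
    intro s τ y
    by_cases h : 1 ≤ s ∧ s ≤ τ ∧ P τ y = 0
    · obtain ⟨w, hw1, hw2⟩ := (hbij s τ h.1 h.2.1).2.2 (show y ∈ {v : X | P τ v = 0} from h.2.2)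
      exact ⟨w, fun _ _ _ => ⟨hw1, hw2⟩⟩
    · exact ⟨0, fun h1 h2 h3 => absurd ⟨h1, h2, h3⟩ h⟩
  choose W hW using hwex
  have hWuniq : ∀ s τ : ℝ, 1 ≤ s → s ≤ τ → ∀ w : X, P s w = 0 → W s τ (T τ s w) = w := by
    intro s τ hs hsτ w hw
    obtain ⟨h1, h2⟩ := hW s τ (T τ s w) hs hsτ (hTker s τ hs hsτ w hw)
    exact (hbij s τ hs hsτ).2.1 h1 hw h2
  have hWker : ∀ s τ : ℝ, 1 ≤ s → s ≤ τ → ∀ y : X, P τ y = 0 → P s (W s τ y) = 0 :=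
    fun s τ hs hsτ y hy => (hW s τ y hs hsτ hy).1
  have hWT : ∀ s τ : ℝ, 1 ≤ s → s ≤ τ → ∀ y : X, P τ y = 0 → T τ s (W s τ y) = y :=
    fun s τ hs hsτ y hy => (hW s τ y hs hsτ hy).2
  have hWzero : ∀ s τ : ℝ, 1 ≤ s → s ≤ τ → W s τ 0 = 0 := by
    intro s τ hs hsτ
    have := hWuniq s τ hs hsτ 0 (map_zero _)
    rwa [map_zero] at this
  have hWadd : ∀ s τ : ℝ, 1 ≤ s → s ≤ τ → ∀ y y' : X, P τ y = 0 → P τ y' = 0 →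
      W s τ (y + y') = W s τ y + W s τ y' := by
    intro s τ hs hsτ y y' hy hy'
    have hk : P s (W s τ y + W s τ y') = 0 := by
      rw [map_add, hWker s τ hs hsτ y hy, hWker s τ hs hsτ y' hy', add_zero]
    have := hWuniq s τ hs hsτ _ hk
    rwa [map_add, hWT s τ hs hsτ y hy, hWT s τ hs hsτ y' hy'] at this
  have hWsmul : ∀ s τ : ℝ, 1 ≤ s → s ≤ τ → ∀ (c : ℝ) (y : X), P τ y = 0 →
      W s τ (c • y) = c • W s τ y := by
    intro s τ hs hsτ c y hy
    have hk : P s (c • W s τ y) = 0 := by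
      rw [map_smul, hWker s τ hs hsτ y hy, smul_zero]
    have := hWuniq s τ hs hsτ _ hk
    rwa [map_smul, hWT s τ hs hsτ y hy] at this
  have hWshift : ∀ s τ t : ℝ, 1 ≤ s → s ≤ τ → τ ≤ t → ∀ y : X, P τ y = 0 →
      W s t (T t τ y) = W s τ y := by
    intro s τ t hs hsτ hτt y hy
    have h1s : (1:ℝ) ≤ s := hs
    have hk := hWker s τ hs hsτ y hy
    have := hWuniq s t hs (hsτ.trans hτt) (W s τ y) hk
    rwa [← hTTx s τ t hs hsτ hτt, hWT s τ hs hsτ y hy] at this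
  have hWmid : ∀ τ r t : ℝ, 1 ≤ τ → τ ≤ r → r ≤ t → ∀ y : X, P τ y = 0 →
      W r t (T t τ y) = T r τ y := by
    intro τ r t hτ hτr hrt y hy
    have hk : P r (T r τ y) = 0 := hTker τ r hτ hτr y hy
    have := hWuniq r t (hτ.trans hτr) hrt (T r τ y) hk
    rwa [hTTx τ r t hτ hτr hrt] at this
  -- the three pieces of the Lyapunov norm
  set A : ℝ → X → ℝ := fun τ x => sSup ((fun t => ‖T t τ (P τ x)‖ * (t / τ) ^ lam) '' Ici τ)
    with hAdef
  set B : ℝ → X → ℝ :=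
      fun τ x => sSup ((fun s => ‖W s τ (x - P τ x)‖ * (τ / s) ^ lam) '' Icc 1 τ) with hBdef
  set E : ℝ → X → ℝ :=
      fun τ x => sSup ((fun t => ‖T t τ (x - P τ x)‖ * (t / τ) ^ (-b)) '' Ici τ) with hEdef
  -- elementwise upper bounds
  have hrpow_cancel : ∀ u : ℝ, 0 < u → ∀ e : ℝ, u ^ e * u ^ (-e) = 1 := by
    intro u hu e; rw [← Real.rpow_add hu]; simp
  have hAelt : ∀ τ : ℝ, 1 ≤ τ → ∀ x : X, ∀ t ∈ Ici τ,
      ‖T t τ (P τ x)‖ * (t / τ) ^ lam ≤ D * τ ^ ε * ‖x‖ := by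
    intro τ hτ x t ht
    have hτt : τ ≤ t := ht
    have hq : (0:ℝ) < t / τ := div_pos (hpos t (hτ.trans hτt)) (hpos τ hτ)
    calc ‖T t τ (P τ x)‖ * (t / τ) ^ lam
        ≤ (D * (t / τ) ^ (-lam) * τ ^ ε * ‖x‖) * (t / τ) ^ lam := by
          gcongr; exact hS' τ t hτ hτt x
      _ = (D * τ ^ ε * ‖x‖) * ((t / τ) ^ lam * (t / τ) ^ (-lam)) := by ring
      _ = D * τ ^ ε * ‖x‖ := by rw [hrpow_cancel _ hq lam, mul_one]
  have hBelt : ∀ τ : ℝ, 1 ≤ τ → ∀ x : X, ∀ s ∈ Icc 1 τ,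
      ‖W s τ (x - P τ x)‖ * (τ / s) ^ lam ≤ D * τ ^ ε * ‖x - P τ x‖ := by
    intro τ hτ x s hs
    have hk := hQker τ hτ x
    have h1 := hU' s τ hs.1 hs.2 (W s τ (x - P τ x)) (hWker s τ hs.1 hs.2 _ hk)
    rw [hWT s τ hs.1 hs.2 _ hk] at h1
    have hDD : D * D⁻¹ = 1 := mul_inv_cancel₀ hD.ne'
    have hτe : τ ^ ε * τ ^ (-ε) = 1 := hrpow_cancel τ (hpos τ hτ) ε
    calc ‖W s τ (x - P τ x)‖ * (τ / s) ^ lam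
        = (D * D⁻¹) * (τ ^ ε * τ ^ (-ε)) * (‖W s τ (x - P τ x)‖ * (τ / s) ^ lam) := by
          rw [hDD, hτe]; ring
      _ = (D * τ ^ ε) * (D⁻¹ * (τ / s) ^ lam * τ ^ (-ε) * ‖W s τ (x - P τ x)‖) := by ring
      _ ≤ (D * τ ^ ε) * ‖x - P τ x‖ := by
          apply mul_le_mul_of_nonneg_left h1 (by positivity)
      _ = D * τ ^ ε * ‖x - P τ x‖ := by ring
  have hEelt : ∀ τ : ℝ, 1 ≤ τ → ∀ x : X, ∀ t ∈ Ici τ,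
      ‖T t τ (x - P τ x)‖ * (t / τ) ^ (-b) ≤ K * τ ^ ε * ‖x - P τ x‖ := by
    intro τ hτ x t ht
    have hτt : τ ≤ t := ht
    have hq : (0:ℝ) < t / τ := div_pos (hpos t (hτ.trans hτt)) (hpos τ hτ)
    calc ‖T t τ (x - P τ x)‖ * (t / τ) ^ (-b)
        ≤ (K * (t / τ) ^ b * τ ^ ε * ‖x - P τ x‖) * (t / τ) ^ (-b) := by
          gcongr; exact hG' τ t hτ hτt _
      _ = (K * τ ^ ε * ‖x - P τ x‖) * ((t / τ) ^ b * (t / τ) ^ (-b)) := by ring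
      _ = K * τ ^ ε * ‖x - P τ x‖ := by rw [hrpow_cancel _ hq b, mul_one]
  -- nonemptiness and boundedness
  have hAne : ∀ τ : ℝ, ∀ x : X,
      ((fun t => ‖T t τ (P τ x)‖ * (t / τ) ^ lam) '' Ici τ).Nonempty :=
    fun τ x => ⟨_, ⟨τ, self_mem_Ici, rfl⟩⟩
  have hBne : ∀ τ : ℝ, 1 ≤ τ → ∀ x : X,
      ((fun s => ‖W s τ (x - P τ x)‖ * (τ / s) ^ lam) '' Icc 1 τ).Nonempty :=
    fun τ hτ x => ⟨_, ⟨τ, ⟨hτ, le_rfl⟩, rfl⟩⟩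
  have hEne : ∀ τ : ℝ, ∀ x : X,
      ((fun t => ‖T t τ (x - P τ x)‖ * (t / τ) ^ (-b)) '' Ici τ).Nonempty :=
    fun τ x => ⟨_, ⟨τ, self_mem_Ici, rfl⟩⟩
  have hAbdd : ∀ τ : ℝ, 1 ≤ τ → ∀ x : X,
      BddAbove ((fun t => ‖T t τ (P τ x)‖ * (t / τ) ^ lam) '' Ici τ) := by
    intro τ hτ x
    exact ⟨D * τ ^ ε * ‖x‖, by rintro _ ⟨t, ht, rfl⟩; exact hAelt τ hτ x t ht⟩
  have hBbdd : ∀ τ : ℝ, 1 ≤ τ → ∀ x : X,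
      BddAbove ((fun s => ‖W s τ (x - P τ x)‖ * (τ / s) ^ lam) '' Icc 1 τ) := by
    intro τ hτ x
    exact ⟨D * τ ^ ε * ‖x - P τ x‖, by rintro _ ⟨s, hs, rfl⟩; exact hBelt τ hτ x s hs⟩
  have hEbdd : ∀ τ : ℝ, 1 ≤ τ → ∀ x : X,
      BddAbove ((fun t => ‖T t τ (x - P τ x)‖ * (t / τ) ^ (-b)) '' Ici τ) := by
    intro τ hτ x
    exact ⟨K * τ ^ ε * ‖x - P τ x‖, by rintro _ ⟨t, ht, rfl⟩; exact hEelt τ hτ x t ht⟩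
  -- lower bounds via the element at t = τ (resp. s = τ)
  have hone : ∀ τ : ℝ, 1 ≤ τ → (τ / τ : ℝ) = 1 := fun τ hτ => div_self (hpos τ hτ).ne'
  have hAge : ∀ τ : ℝ, 1 ≤ τ → ∀ x : X, ‖P τ x‖ ≤ A τ x := by
    intro τ hτ x
    have h1 : ‖T τ τ (P τ x)‖ * (τ / τ) ^ lam = ‖P τ x‖ := by
      rw [hidx τ hτ, hone τ hτ, Real.one_rpow, mul_one]
    rw [hAdef, ← h1]
    exact le_csSup (hAbdd τ hτ x) ⟨τ, self_mem_Ici, rfl⟩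
  have hBge : ∀ τ : ℝ, 1 ≤ τ → ∀ x : X, ‖x - P τ x‖ ≤ B τ x := by
    intro τ hτ x
    have hWττ : W τ τ (x - P τ x) = x - P τ x := by
      have := hWuniq τ τ hτ le_rfl (x - P τ x) (hQker τ hτ x)
      rwa [hidx τ hτ] at this
    have h1 : ‖W τ τ (x - P τ x)‖ * (τ / τ) ^ lam = ‖x - P τ x‖ := by
      rw [hWττ, hone τ hτ, Real.one_rpow, mul_one]
    rw [hBdef, ← h1]
    exact le_csSup (hBbdd τ hτ x) ⟨τ, ⟨hτ, le_rfl⟩, rfl⟩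
  have hEge : ∀ τ : ℝ, 1 ≤ τ → ∀ x : X, ‖x - P τ x‖ ≤ E τ x := by
    intro τ hτ x
    have h1 : ‖T τ τ (x - P τ x)‖ * (τ / τ) ^ (-b) = ‖x - P τ x‖ := by
      rw [hidx τ hτ, hone τ hτ, Real.one_rpow, mul_one]
    rw [hEdef, ← h1]
    exact le_csSup (hEbdd τ hτ x) ⟨τ, self_mem_Ici, rfl⟩
  have hAnn : ∀ τ : ℝ, 1 ≤ τ → ∀ x : X, 0 ≤ A τ x :=
    fun τ hτ x => le_trans (norm_nonneg _) (hAge τ hτ x)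
  have hBnn : ∀ τ : ℝ, 1 ≤ τ → ∀ x : X, 0 ≤ B τ x :=
    fun τ hτ x => le_trans (norm_nonneg _) (hBge τ hτ x)
  have hEnn : ∀ τ : ℝ, 1 ≤ τ → ∀ x : X, 0 ≤ E τ x :=
    fun τ hτ x => le_trans (norm_nonneg _) (hEge τ hτ x)
  -- global upper bounds
  have hAle : ∀ τ : ℝ, 1 ≤ τ → ∀ x : X, A τ x ≤ D * τ ^ ε * ‖x‖ := by
    intro τ hτ x
    exact csSup_le (hAne τ x) (by rintro _ ⟨t, ht, rfl⟩; exact hAelt τ hτ x t ht)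
  have hBle : ∀ τ : ℝ, 1 ≤ τ → ∀ x : X, B τ x ≤ D * τ ^ ε * ‖x - P τ x‖ := by
    intro τ hτ x
    exact csSup_le (hBne τ hτ x) (by rintro _ ⟨s, hs, rfl⟩; exact hBelt τ hτ x s hs)
  have hEle : ∀ τ : ℝ, 1 ≤ τ → ∀ x : X, E τ x ≤ K * τ ^ ε * ‖x - P τ x‖ := by
    intro τ hτ x
    exact csSup_le (hEne τ x) (by rintro _ ⟨t, ht, rfl⟩; exact hEelt τ hτ x t ht)
  -- the norm family
  set N : ℝ → X → ℝ := fun τ x => if 1 ≤ τ then A τ x + B τ x + E τ x else ‖x‖ with hNdef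
  have hNpos : ∀ τ : ℝ, 1 ≤ τ → ∀ x : X, N τ x = A τ x + B τ x + E τ x := by
    intro τ hτ x; rw [hNdef]; simp [if_pos hτ]
  have keysplit : ∀ p q r : ℝ, 0 < p → 0 < q → 0 < r → ∀ e : ℝ,
      (r / p) ^ e = (r / q) ^ e * (q / p) ^ e := by
    intro p q r hp hq hr e
    rw [← Real.mul_rpow (by positivity) (by positivity)]
    congr 1
    field_simp
  have hflip : ∀ p q e : ℝ, 0 < p → 0 < q → (q / p) ^ (-e) = (p / q) ^ e := by
    intro p q e hp hq
    rw [show q / p = (p / q)⁻¹ from by rw [inv_div],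
      Real.inv_rpow (div_nonneg hp.le hq.le), Real.rpow_neg (div_nonneg hp.le hq.le),
      inv_inv]
  refine ⟨N, D + D + D * D + K + K * D, 2, lam + b, 2 * ε,
    by positivity, by norm_num, by positivity, by positivity, ⟨?_, ?_, ?_⟩, ?_, ?_⟩
  · -- triangle inequality
    intro t x y
    by_cases ht : 1 ≤ t
    · rw [hNpos t ht, hNpos t ht, hNpos t ht]
      have hA : A t (x + y) ≤ A t x + A t y := by
        apply csSup_le (hAne t (x + y))
        rintro _ ⟨r, hr, rfl⟩
        have hrnn : (0:ℝ) ≤ (r / t) ^ lam :=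
          Real.rpow_nonneg (div_nonneg (by linarith [mem_Ici.1 hr]) (by linarith)) _
        calc ‖T r t (P t (x + y))‖ * (r / t) ^ lam
            ≤ (‖T r t (P t x)‖ + ‖T r t (P t y)‖) * (r / t) ^ lam := by
              apply mul_le_mul_of_nonneg_right _ hrnn
              rw [map_add, map_add]; exact norm_add_le _ _
          _ = ‖T r t (P t x)‖ * (r / t) ^ lam + ‖T r t (P t y)‖ * (r / t) ^ lam := by ring
          _ ≤ A t x + A t y := add_le_add
              (le_csSup (hAbdd t ht x) ⟨r, hr, rfl⟩) (le_csSup (hAbdd t ht y) ⟨r, hr, rfl⟩)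
      have hB : B t (x + y) ≤ B t x + B t y := by
        apply csSup_le (hBne t ht (x + y))
        rintro _ ⟨s, hs, rfl⟩
        have hsplit : (x + y) - P t (x + y) = (x - P t x) + (y - P t y) := by
          rw [map_add]; abel
        calc ‖W s t ((x + y) - P t (x + y))‖ * (t / s) ^ lam
            = ‖W s t (x - P t x) + W s t (y - P t y)‖ * (t / s) ^ lam := by
              rw [hsplit, hWadd s t hs.1 hs.2 _ _ (hQker t ht x) (hQker t ht y)]
          _ ≤ (‖W s t (x - P t x)‖ + ‖W s t (y - P t y)‖) * (t / s) ^ lam := by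
              have hsnn : (0:ℝ) ≤ (t / s) ^ lam :=
                Real.rpow_nonneg (div_nonneg (by linarith) (by linarith [hs.1])) _
              exact mul_le_mul_of_nonneg_right (norm_add_le _ _) hsnn
          _ = ‖W s t (x - P t x)‖ * (t / s) ^ lam + ‖W s t (y - P t y)‖ * (t / s) ^ lam := by
              ring
          _ ≤ B t x + B t y := add_le_add
              (le_csSup (hBbdd t ht x) ⟨s, hs, rfl⟩) (le_csSup (hBbdd t ht y) ⟨s, hs, rfl⟩)
      have hE : E t (x + y) ≤ E t x + E t y := by
        apply csSup_le (hEne t (x + y))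
        rintro _ ⟨r, hr, rfl⟩
        have hsplit : (x + y) - P t (x + y) = (x - P t x) + (y - P t y) := by
          rw [map_add]; abel
        have hrnn : (0:ℝ) ≤ (r / t) ^ (-b) :=
          Real.rpow_nonneg (div_nonneg (by linarith [mem_Ici.1 hr]) (by linarith)) _
        calc ‖T r t ((x + y) - P t (x + y))‖ * (r / t) ^ (-b)
            ≤ (‖T r t (x - P t x)‖ + ‖T r t (y - P t y)‖) * (r / t) ^ (-b) := by
              apply mul_le_mul_of_nonneg_right _ hrnn
              rw [hsplit, map_add]; exact norm_add_le _ _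
          _ = ‖T r t (x - P t x)‖ * (r / t) ^ (-b) + ‖T r t (y - P t y)‖ * (r / t) ^ (-b) := by
              ring
          _ ≤ E t x + E t y := add_le_add
              (le_csSup (hEbdd t ht x) ⟨r, hr, rfl⟩) (le_csSup (hEbdd t ht y) ⟨r, hr, rfl⟩)
      linarith
    · rw [hNdef]; simp only [if_neg ht]; exact norm_add_le _ _
  · -- homogeneity
    intro t c x
    by_cases ht : 1 ≤ t
    · rw [hNpos t ht, hNpos t ht]
      have hA : A t (c • x) = |c| * A t x := by
        rw [hAdef]
        apply mul_sSup_image' (abs_nonneg c)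
        intro r hr
        rw [map_smul, map_smul, norm_smul, Real.norm_eq_abs]; ring
      have hB : B t (c • x) = |c| * B t x := by
        rw [hBdef]
        apply mul_sSup_image' (abs_nonneg c)
        intro s hs
        have hsplit : (c • x) - P t (c • x) = c • (x - P t x) := by
          rw [map_smul, smul_sub]
        rw [hsplit, hWsmul s t hs.1 hs.2 c _ (hQker t ht x), norm_smul, Real.norm_eq_abs]
        ring
      have hE : E t (c • x) = |c| * E t x := by
        rw [hEdef]
        apply mul_sSup_image' (abs_nonneg c)
        intro r hr
        have hsplit : (c • x) - P t (c • x) = c • (x - P t x) := by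
          rw [map_smul, smul_sub]
        rw [hsplit, map_smul, norm_smul, Real.norm_eq_abs]; ring
      rw [hA, hB, hE]; ring
    · rw [hNdef]; simp only [if_neg ht]; rw [norm_smul, Real.norm_eq_abs]
  · -- equivalence bounds
    intro t x ht
    rw [hNpos t ht]
    have hone' : (1:ℝ) ≤ t ^ ε := Real.one_le_rpow ht hε
    have htpos := hpos t ht
    have ht2 : t ^ ε * t ^ ε = t ^ (2 * ε) := by
      rw [← Real.rpow_add htpos]; ring_nf
    have hte2 : t ^ ε ≤ t ^ (2 * ε) := by
      calc t ^ ε = 1 * t ^ ε := (one_mul _).symm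
        _ ≤ t ^ ε * t ^ ε := by gcongr
        _ = t ^ (2 * ε) := ht2
    constructor
    · calc ‖x‖ = ‖P t x + (x - P t x)‖ := by congr 1; abel
        _ ≤ ‖P t x‖ + ‖x - P t x‖ := norm_add_le _ _
        _ ≤ A t x + B t x := add_le_add (hAge t ht x) (hBge t ht x)
        _ ≤ A t x + B t x + E t x := le_add_of_nonneg_right (hEnn t ht x)
    · have hPle : ‖P t x‖ ≤ D * t ^ ε * ‖x‖ := by
        have := hS' t t ht le_rfl x
        rwa [hidx t ht, hone t ht, Real.one_rpow, mul_one] at this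
      have hqle : ‖x - P t x‖ ≤ (1 + D * t ^ ε) * ‖x‖ := by
        calc ‖x - P t x‖ ≤ ‖x‖ + ‖P t x‖ := norm_sub_le _ _
          _ ≤ ‖x‖ + D * t ^ ε * ‖x‖ := by linarith
          _ = (1 + D * t ^ ε) * ‖x‖ := by ring
      have hAb : A t x ≤ D * t ^ (2 * ε) * ‖x‖ := by
        refine (hAle t ht x).trans ?_
        exact mul_le_mul_of_nonneg_right
          (mul_le_mul_of_nonneg_left hte2 hD.le) (norm_nonneg x)
      have hBb : B t x ≤ (D + D * D) * t ^ (2 * ε) * ‖x‖ := by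
        refine (hBle t ht x).trans ?_
        calc D * t ^ ε * ‖x - P t x‖ ≤ D * t ^ ε * ((1 + D * t ^ ε) * ‖x‖) := by
              exact mul_le_mul_of_nonneg_left hqle (by positivity)
          _ = D * t ^ ε * ‖x‖ + D * D * (t ^ ε * t ^ ε) * ‖x‖ := by ring
          _ = D * t ^ ε * ‖x‖ + D * D * t ^ (2 * ε) * ‖x‖ := by rw [ht2]
          _ ≤ D * t ^ (2 * ε) * ‖x‖ + D * D * t ^ (2 * ε) * ‖x‖ := by
              have := mul_le_mul_of_nonneg_right
                (mul_le_mul_of_nonneg_left hte2 hD.le) (norm_nonneg x)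
              linarith
          _ = (D + D * D) * t ^ (2 * ε) * ‖x‖ := by ring
      have hEb : E t x ≤ (K + K * D) * t ^ (2 * ε) * ‖x‖ := by
        refine (hEle t ht x).trans ?_
        calc K * t ^ ε * ‖x - P t x‖ ≤ K * t ^ ε * ((1 + D * t ^ ε) * ‖x‖) := by
              exact mul_le_mul_of_nonneg_left hqle (by positivity)
          _ = K * t ^ ε * ‖x‖ + K * D * (t ^ ε * t ^ ε) * ‖x‖ := by ring
          _ = K * t ^ ε * ‖x‖ + K * D * t ^ (2 * ε) * ‖x‖ := by rw [ht2]
          _ ≤ K * t ^ (2 * ε) * ‖x‖ + K * D * t ^ (2 * ε) * ‖x‖ := by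
              have := mul_le_mul_of_nonneg_right
                (mul_le_mul_of_nonneg_left hte2 hK.le) (norm_nonneg x)
              linarith
          _ = (K + K * D) * t ^ (2 * ε) * ‖x‖ := by ring
      calc A t x + B t x + E t x
          ≤ D * t ^ (2 * ε) * ‖x‖ + (D + D * D) * t ^ (2 * ε) * ‖x‖
            + (K + K * D) * t ^ (2 * ε) * ‖x‖ := by linarith
        _ = (D + D + D * D + K + K * D) * t ^ (2 * ε) * ‖x‖ := by ring
  · -- polynomial bounded growth with M = 2, a = lam + b
    intro τ t hτ hτt x
    have h1t : (1:ℝ) ≤ t := hτ.trans hτt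
    have hτp := hpos τ hτ
    have htp := hpos t h1t
    have hF1 : (1:ℝ) ≤ t / τ := (one_le_div hτp).2 hτt
    have hFp : (0:ℝ) < t / τ := lt_of_lt_of_le one_pos hF1
    have hq := hQker τ hτ x
    -- splitting of ratios
    have key : ∀ p q r : ℝ, 0 < p → 0 < q → 0 < r → ∀ e : ℝ,
        (r / p) ^ e = (r / q) ^ e * (q / p) ^ e := by
      intro p q r hp hq hr e
      rw [← Real.mul_rpow (by positivity) (by positivity)]
      congr 1
      field_simp
    have hQy : T t τ x - P t (T t τ x) = T t τ (x - P τ x) := by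
      rw [hPTx τ t hτ hτt, map_sub]
    -- stable part does not grow
    have hAgrow : A t (T t τ x) ≤ A τ x := by
      apply csSup_le (hAne t (T t τ x))
      rintro _ ⟨r, hr, rfl⟩
      have htr : t ≤ r := hr
      have hτr : τ ≤ r := hτt.trans htr
      have h1 : P t (T t τ x) = T t τ (P τ x) := hPTx τ t hτ hτt x
      have h2 : T r t (T t τ (P τ x)) = T r τ (P τ x) := hTTx τ t r hτ hτt htr _
      have h3 : (r / t) ^ lam ≤ (r / τ) ^ lam := by
        apply Real.rpow_le_rpow (div_nonneg (by linarith) (by linarith)) _ hlam.le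
        exact div_le_div_of_nonneg_left (by linarith) hτp hτt
      calc ‖T r t (P t (T t τ x))‖ * (r / t) ^ lam
          = ‖T r τ (P τ x)‖ * (r / t) ^ lam := by rw [h1, h2]
        _ ≤ ‖T r τ (P τ x)‖ * (r / τ) ^ lam := by
            exact mul_le_mul_of_nonneg_left h3 (norm_nonneg _)
        _ ≤ A τ x := le_csSup (hAbdd τ hτ x) ⟨r, hτr, rfl⟩
    -- unstable-backward part grows at most like (t/τ)^(lam+b)
    have hBgrow : B t (T t τ x) ≤ (t / τ) ^ (lam + b) * (B τ x + E τ x) := by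
      apply csSup_le (hBne t h1t (T t τ x))
      rintro _ ⟨s, hs, rfl⟩
      have hFab : (1:ℝ) ≤ (t / τ) ^ (lam + b) := Real.one_le_rpow hF1 (by positivity)
      rcases le_total s τ with hsτ | hτs
      · -- s ≤ τ
        have hWs : W s t (T t τ x - P t (T t τ x)) = W s τ (x - P τ x) := by
          rw [hQy]; exact hWshift s τ t hs.1 hsτ hτt _ hq
        have hsp := hpos s hs.1
        have hts : (t / s) ^ lam = (t / τ) ^ lam * (τ / s) ^ lam := key s τ t hsp hτp htp lam
        have hmem : ‖W s τ (x - P τ x)‖ * (τ / s) ^ lam ≤ B τ x :=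
          le_csSup (hBbdd τ hτ x) ⟨s, ⟨hs.1, hsτ⟩, rfl⟩
        have hlamab : (t / τ) ^ lam ≤ (t / τ) ^ (lam + b) :=
          Real.rpow_le_rpow_of_exponent_le hF1 (by linarith)
        calc ‖W s t (T t τ x - P t (T t τ x))‖ * (t / s) ^ lam
            = (t / τ) ^ lam * (‖W s τ (x - P τ x)‖ * (τ / s) ^ lam) := by
              rw [hWs, hts]; ring
          _ ≤ (t / τ) ^ lam * B τ x := by
              exact mul_le_mul_of_nonneg_left hmem (Real.rpow_nonneg hFp.le _)
          _ ≤ (t / τ) ^ (lam + b) * B τ x :=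
              mul_le_mul_of_nonneg_right hlamab (hBnn τ hτ x)
          _ ≤ (t / τ) ^ (lam + b) * (B τ x + E τ x) := by
              apply mul_le_mul_of_nonneg_left _ (Real.rpow_nonneg hFp.le _)
              linarith [hEnn τ hτ x]
      · -- τ ≤ s ≤ t
        have hWs : W s t (T t τ x - P t (T t τ x)) = T s τ (x - P τ x) := by
          rw [hQy]; exact hWmid τ s t hτ hτs hs.2 _ hq
        have hsp := hpos s hs.1
        have hEmem : ‖T s τ (x - P τ x)‖ * (s / τ) ^ (-b) ≤ E τ x :=
          le_csSup (hEbdd τ hτ x) ⟨s, hτs, rfl⟩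
        have hsτF : (0:ℝ) < s / τ := div_pos hsp hτp
        have hTs : ‖T s τ (x - P τ x)‖ ≤ (s / τ) ^ b * E τ x := by
          have h1 := mul_le_mul_of_nonneg_left hEmem
            (le_of_lt (Real.rpow_pos_of_pos hsτF b))
          calc ‖T s τ (x - P τ x)‖
              = (s / τ) ^ b * (‖T s τ (x - P τ x)‖ * (s / τ) ^ (-b)) := by
                rw [show (s / τ) ^ b * (‖T s τ (x - P τ x)‖ * (s / τ) ^ (-b))
                    = (s / τ) ^ b * (s / τ) ^ (-b) * ‖T s τ (x - P τ x)‖ by ring,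
                  hrpow_cancel _ hsτF b, one_mul]
            _ ≤ (s / τ) ^ b * E τ x := h1
        have hfac1 : (s / τ) ^ b ≤ (t / τ) ^ b := by
          apply Real.rpow_le_rpow (div_nonneg hsp.le hτp.le) _ hb.le
          exact div_le_div_of_nonneg_right hs.2 hτp.le
        have hfac2 : (t / s) ^ lam ≤ (t / τ) ^ lam := by
          apply Real.rpow_le_rpow (div_nonneg htp.le hsp.le) _ hlam.le
          exact div_le_div_of_nonneg_left (by linarith) hτp hτs
        have hEτnn := hEnn τ hτ x
        have hBτnn := hBnn τ hτ x
        have hadd : (t / τ) ^ (lam + b) = (t / τ) ^ lam * (t / τ) ^ b :=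
          Real.rpow_add hFp lam b
        calc ‖W s t (T t τ x - P t (T t τ x))‖ * (t / s) ^ lam
            = ‖T s τ (x - P τ x)‖ * (t / s) ^ lam := by rw [hWs]
          _ ≤ ((s / τ) ^ b * E τ x) * (t / τ) ^ lam := by
              apply mul_le_mul hTs hfac2 (Real.rpow_nonneg (div_nonneg htp.le hsp.le) _)
                (mul_nonneg (Real.rpow_nonneg (div_nonneg hsp.le hτp.le) _) hEτnn)
          _ ≤ ((t / τ) ^ b * E τ x) * (t / τ) ^ lam := by
              apply mul_le_mul_of_nonneg_right _ (Real.rpow_nonneg hFp.le _)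
              exact mul_le_mul_of_nonneg_right hfac1 hEτnn
          _ = (t / τ) ^ (lam + b) * E τ x := by rw [hadd]; ring
          _ ≤ (t / τ) ^ (lam + b) * (B τ x + E τ x) := by
              apply mul_le_mul_of_nonneg_left _ (Real.rpow_nonneg hFp.le _)
              linarith
    -- unstable-forward part grows at most like (t/τ)^b
    have hEgrow : E t (T t τ x) ≤ (t / τ) ^ b * E τ x := by
      apply csSup_le (hEne t (T t τ x))
      rintro _ ⟨r, hr, rfl⟩
      have htr : t ≤ r := hr
      have hτr : τ ≤ r := hτt.trans htr
      have hrp := hpos r (h1t.trans htr)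
      have h2 : T r t (T t τ (x - P τ x)) = T r τ (x - P τ x) := hTTx τ t r hτ hτt htr _
      have hinvsplit : (τ / t) ^ (-b) = (t / τ) ^ b := by
        rw [show τ / t = (t / τ)⁻¹ from by rw [inv_div], Real.inv_rpow hFp.le,
          Real.rpow_neg hFp.le, inv_inv]
      have hsplit : (r / t) ^ (-b) = (r / τ) ^ (-b) * (t / τ) ^ b := by
        rw [key t τ r htp hτp hrp (-b), hinvsplit]
      have hmem : ‖T r τ (x - P τ x)‖ * (r / τ) ^ (-b) ≤ E τ x :=
        le_csSup (hEbdd τ hτ x) ⟨r, hτr, rfl⟩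
      calc ‖T r t (T t τ x - P t (T t τ x))‖ * (r / t) ^ (-b)
          = (t / τ) ^ b * (‖T r τ (x - P τ x)‖ * (r / τ) ^ (-b)) := by
            rw [hQy, h2, hsplit]; ring
        _ ≤ (t / τ) ^ b * E τ x := by
            exact mul_le_mul_of_nonneg_left hmem (Real.rpow_nonneg hFp.le _)
    -- assemble
    rw [hNpos t h1t, hNpos τ hτ]
    have hFab : (1:ℝ) ≤ (t / τ) ^ (lam + b) := Real.one_le_rpow hF1 (by positivity)
    have hfb : (t / τ) ^ b ≤ (t / τ) ^ (lam + b) :=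
      Real.rpow_le_rpow_of_exponent_le hF1 (by linarith)
    have hAτnn := hAnn τ hτ x
    have hBτnn := hBnn τ hτ x
    have hEτnn := hEnn τ hτ x
    have h1 : A t (T t τ x) ≤ (t / τ) ^ (lam + b) * A τ x :=
      hAgrow.trans (le_mul_of_one_le_left hAτnn hFab)
    have h3 : E t (T t τ x) ≤ (t / τ) ^ (lam + b) * E τ x := by
      refine hEgrow.trans ?_
      apply mul_le_mul_of_nonneg_right hfb hEτnn
    calc A t (T t τ x) + B t (T t τ x) + E t (T t τ x)
        ≤ (t / τ) ^ (lam + b) * A τ x + (t / τ) ^ (lam + b) * (B τ x + E τ x)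
          + (t / τ) ^ (lam + b) * E τ x := by linarith [hBgrow]
      _ ≤ 2 * (t / τ) ^ (lam + b) * (A τ x + B τ x + E τ x) := by
          have hFnn : (0:ℝ) ≤ (t / τ) ^ (lam + b) := Real.rpow_nonneg hFp.le _
          have h4 := mul_nonneg hFnn hAτnn
          have h5 := mul_nonneg hFnn hBτnn
          nlinarith
  · -- the polynomial dichotomy with respect to N
    refine ⟨P, 2, min lam b, by norm_num, lt_min hlam hb, hPP, hPT, hbij, ?_, ?_⟩
    · -- contraction on the range of P
      intro τ t hτ hτt x
      have h1t : (1:ℝ) ≤ t := hτ.trans hτt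
      have hτp := hpos τ hτ
      have htp := hpos t h1t
      have hF1 : (1:ℝ) ≤ t / τ := (one_le_div hτp).2 hτt
      have hFp : (0:ℝ) < t / τ := lt_of_lt_of_le one_pos hF1
      set y := T t τ (P τ x) with hy
      have hPy : P t y = y := by
        rw [hy, hPTx τ t hτ hτt, hPx τ hτ]
      have hyq : y - P t y = 0 := by rw [hPy, sub_self]
      have hB0 : B t y ≤ 0 := by
        apply csSup_le (hBne t h1t y)
        rintro _ ⟨s, hs, rfl⟩
        simp only [hyq, hWzero s t hs.1 hs.2, norm_zero, zero_mul, le_refl]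
      have hE0 : E t y ≤ 0 := by
        apply csSup_le (hEne t y)
        rintro _ ⟨r, hr, rfl⟩
        simp only [hyq, map_zero, norm_zero, zero_mul, le_refl]
      have hA' : A t y ≤ (t / τ) ^ (-lam) * A τ x := by
        apply csSup_le (hAne t y)
        rintro _ ⟨r, hr, rfl⟩
        have htr : t ≤ r := hr
        have hτr : τ ≤ r := hτt.trans htr
        have hrp := hpos r (h1t.trans htr)
        have h2 : T r t y = T r τ (P τ x) := by
          rw [hy]; exact hTTx τ t r hτ hτt htr _
        have h3 : (r / t) ^ lam = (r / τ) ^ lam * (t / τ) ^ (-lam) := by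
          rw [keysplit t τ r htp hτp hrp lam, hflip τ t lam hτp htp]
        calc ‖T r t (P t y)‖ * (r / t) ^ lam
            = (t / τ) ^ (-lam) * (‖T r τ (P τ x)‖ * (r / τ) ^ lam) := by
              rw [hPy, h2, h3]; ring
          _ ≤ (t / τ) ^ (-lam) * A τ x :=
              mul_le_mul_of_nonneg_left (le_csSup (hAbdd τ hτ x) ⟨r, hτr, rfl⟩)
                (Real.rpow_nonneg hFp.le _)
      rw [hNpos t h1t, hNpos τ hτ]
      have hmono : (t / τ) ^ (-lam) ≤ (t / τ) ^ (-(min lam b)) :=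
        Real.rpow_le_rpow_of_exponent_le hF1 (neg_le_neg (min_le_left _ _))
      have hAτnn := hAnn τ hτ x
      have hBτnn := hBnn τ hτ x
      have hEτnn := hEnn τ hτ x
      have hfnn : (0:ℝ) ≤ (t / τ) ^ (-(min lam b)) := Real.rpow_nonneg hFp.le _
      have step1 : A t y + B t y + E t y ≤ (t / τ) ^ (-lam) * A τ x := by linarith
      have step2 : (t / τ) ^ (-lam) * A τ x ≤ (t / τ) ^ (-(min lam b)) * A τ x :=
        mul_le_mul_of_nonneg_right hmono hAτnn
      have step3 : (t / τ) ^ (-(min lam b)) * A τ x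
          ≤ (t / τ) ^ (-(min lam b)) * (A τ x + B τ x + E τ x) :=
        mul_le_mul_of_nonneg_left (by linarith) hfnn
      have step4 : (0:ℝ) ≤ (t / τ) ^ (-(min lam b)) * (A τ x + B τ x + E τ x) :=
        mul_nonneg hfnn (by linarith)
      linarith
    · -- expansion on the kernel of P
      intro τ t hτ hτt v hv
      have h1t : (1:ℝ) ≤ t := hτ.trans hτt
      have hτp := hpos τ hτ
      have htp := hpos t h1t
      have hF1 : (1:ℝ) ≤ t / τ := (one_le_div hτp).2 hτt
      have hFp : (0:ℝ) < t / τ := lt_of_lt_of_le one_pos hF1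
      set y := T t τ v with hy
      have hPty : P t y = 0 := by rw [hy]; exact hTker τ t hτ hτt v hv
      have hvq : v - P τ v = v := by rw [hv, sub_zero]
      have hyq : y - P t y = y := by rw [hPty, sub_zero]
      have hA0 : A τ v ≤ 0 := by
        apply csSup_le (hAne τ v)
        rintro _ ⟨r, hr, rfl⟩
        simp only [hv, map_zero, norm_zero, zero_mul, le_refl]
      have hBty_nn := hBnn t h1t y
      have hEty_nn := hEnn t h1t y
      have hAty_nn := hAnn t h1t y
      have hmle : min lam b ≤ lam := min_le_left _ _
      have hmb : min lam b ≤ b := min_le_right _ _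
      have hB1 : B τ v ≤ (t / τ) ^ (-(min lam b)) * B t y := by
        apply csSup_le (hBne τ hτ v)
        rintro _ ⟨s, hs, rfl⟩
        have hsp := hpos s hs.1
        have hWs : W s t (y - P t y) = W s τ (v - P τ v) := by
          rw [hyq, hvq, hy]; exact hWshift s τ t hs.1 hs.2 hτt v hv
        have h3 : (t / s) ^ lam = (t / τ) ^ lam * (τ / s) ^ lam :=
          keysplit s τ t hsp hτp htp lam
        have h4 : ‖W s τ (v - P τ v)‖ * (τ / s) ^ lam
            = (t / τ) ^ (-lam) * (‖W s τ (v - P τ v)‖ * (t / s) ^ lam) := by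
          rw [h3, show (t / τ) ^ (-lam) * (‖W s τ (v - P τ v)‖
              * ((t / τ) ^ lam * (τ / s) ^ lam))
              = ((t / τ) ^ lam * (t / τ) ^ (-lam))
                * (‖W s τ (v - P τ v)‖ * (τ / s) ^ lam) from by ring,
            hrpow_cancel _ hFp lam, one_mul]
        calc ‖W s τ (v - P τ v)‖ * (τ / s) ^ lam
            = (t / τ) ^ (-lam) * (‖W s t (y - P t y)‖ * (t / s) ^ lam) := by
              rw [h4, hWs]
          _ ≤ (t / τ) ^ (-lam) * B t y :=
              mul_le_mul_of_nonneg_left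
                (le_csSup (hBbdd t h1t y) ⟨s, ⟨hs.1, hs.2.trans hτt⟩, rfl⟩)
                (Real.rpow_nonneg hFp.le _)
          _ ≤ (t / τ) ^ (-(min lam b)) * B t y :=
              mul_le_mul_of_nonneg_right
                (Real.rpow_le_rpow_of_exponent_le hF1 (neg_le_neg hmle)) hBty_nn
      have hE1 : E τ v ≤ (t / τ) ^ (-(min lam b)) * (B t y + E t y) := by
        apply csSup_le (hEne τ v)
        rintro _ ⟨r, hr, rfl⟩
        have hτr : τ ≤ r := hr
        have hrp := hpos r (hτ.trans hτr)
        have hfnn : (0:ℝ) ≤ (t / τ) ^ (-(min lam b)) := Real.rpow_nonneg hFp.le _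
        rcases le_total t r with htr | hrt
        · have h2 : T r t y = T r τ v := by
            rw [hy]; exact hTTx τ t r hτ hτt htr _
          have h3 : ‖T r τ (v - P τ v)‖ * (r / τ) ^ (-b)
              = (t / τ) ^ (-b) * (‖T r t (y - P t y)‖ * (r / t) ^ (-b)) := by
            rw [hyq, h2, hvq, keysplit τ t r hτp htp hrp (-b)]; ring
          calc ‖T r τ (v - P τ v)‖ * (r / τ) ^ (-b)
              = (t / τ) ^ (-b) * (‖T r t (y - P t y)‖ * (r / t) ^ (-b)) := h3
            _ ≤ (t / τ) ^ (-b) * E t y :=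
                mul_le_mul_of_nonneg_left (le_csSup (hEbdd t h1t y) ⟨r, htr, rfl⟩)
                  (Real.rpow_nonneg hFp.le _)
            _ ≤ (t / τ) ^ (-(min lam b)) * E t y :=
                mul_le_mul_of_nonneg_right
                  (Real.rpow_le_rpow_of_exponent_le hF1 (neg_le_neg hmb)) hEty_nn
            _ ≤ (t / τ) ^ (-(min lam b)) * (B t y + E t y) :=
                mul_le_mul_of_nonneg_left (by linarith) hfnn
        · have hWr : W r t (y - P t y) = T r τ v := by
            rw [hyq, hy]; exact hWmid τ r t hτ hτr hrt v hv
          have hu1 : (1:ℝ) ≤ r / τ := (one_le_div hτp).2 hτr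
          have hup : (0:ℝ) < r / τ := lt_of_lt_of_le one_pos hu1
          have hfac : (r / τ) ^ (-b) ≤ (t / τ) ^ (-(min lam b)) * (t / r) ^ lam := by
            have h5 : (r / τ) ^ (lam - b) ≤ (t / τ) ^ (lam - min lam b) := by
              calc (r / τ) ^ (lam - b) ≤ (r / τ) ^ (lam - min lam b) :=
                    Real.rpow_le_rpow_of_exponent_le hu1 (by linarith)
                _ ≤ (t / τ) ^ (lam - min lam b) :=
                    Real.rpow_le_rpow hup.le (div_le_div_of_nonneg_right hrt hτp.le)
                      (by linarith)
            have e1 : (r / τ) ^ (-b) = (r / τ) ^ (lam - b) * (r / τ) ^ (-lam) := by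
              rw [← Real.rpow_add hup]; ring_nf
            have e2 : (t / r) ^ lam = (t / τ) ^ lam * (τ / r) ^ lam :=
              keysplit r τ t hrp hτp htp lam
            have e3 : (τ / r) ^ lam = (r / τ) ^ (-lam) := (hflip τ r lam hτp hrp).symm
            have e4 : (t / τ) ^ (-(min lam b)) * (t / r) ^ lam
                = (t / τ) ^ (lam - min lam b) * (r / τ) ^ (-lam) := by
              calc (t / τ) ^ (-(min lam b)) * (t / r) ^ lam
                  = ((t / τ) ^ (-(min lam b)) * (t / τ) ^ lam) * (r / τ) ^ (-lam) := by
                    rw [e2, e3]; ring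
                _ = (t / τ) ^ (-(min lam b) + lam) * (r / τ) ^ (-lam) := by
                    rw [Real.rpow_add hFp]
                _ = (t / τ) ^ (lam - min lam b) * (r / τ) ^ (-lam) := by ring_nf
            rw [e1, e4]
            exact mul_le_mul_of_nonneg_right h5 (Real.rpow_nonneg hup.le _)
          calc ‖T r τ (v - P τ v)‖ * (r / τ) ^ (-b)
              ≤ ‖T r τ v‖ * ((t / τ) ^ (-(min lam b)) * (t / r) ^ lam) := by
                rw [hvq]
                exact mul_le_mul_of_nonneg_left hfac (norm_nonneg _)
            _ = (t / τ) ^ (-(min lam b)) * (‖W r t (y - P t y)‖ * (t / r) ^ lam) := by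
                rw [hWr]; ring
            _ ≤ (t / τ) ^ (-(min lam b)) * B t y :=
                mul_le_mul_of_nonneg_left
                  (le_csSup (hBbdd t h1t y) ⟨r, ⟨hτ.trans hτr, hrt⟩, rfl⟩) hfnn
            _ ≤ (t / τ) ^ (-(min lam b)) * (B t y + E t y) :=
                mul_le_mul_of_nonneg_left (by linarith) hfnn
      -- assemble
      rw [hNpos τ hτ, hNpos t h1t]
      have hFm : (0:ℝ) < (t / τ) ^ (min lam b) := Real.rpow_pos_of_pos hFp _
      have hFminv : (t / τ) ^ (min lam b) * (t / τ) ^ (-(min lam b)) = 1 :=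
        hrpow_cancel _ hFp _
      have hB2 : (t / τ) ^ (min lam b) * B τ v ≤ B t y := by
        calc (t / τ) ^ (min lam b) * B τ v
            ≤ (t / τ) ^ (min lam b) * ((t / τ) ^ (-(min lam b)) * B t y) :=
              mul_le_mul_of_nonneg_left hB1 hFm.le
          _ = ((t / τ) ^ (min lam b) * (t / τ) ^ (-(min lam b))) * B t y := by ring
          _ = B t y := by rw [hFminv, one_mul]
      have hE2 : (t / τ) ^ (min lam b) * E τ v ≤ B t y + E t y := by
        calc (t / τ) ^ (min lam b) * E τ v
            ≤ (t / τ) ^ (min lam b) * ((t / τ) ^ (-(min lam b)) * (B t y + E t y)) :=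
              mul_le_mul_of_nonneg_left hE1 hFm.le
          _ = ((t / τ) ^ (min lam b) * (t / τ) ^ (-(min lam b))) * (B t y + E t y) := by
              ring
          _ = B t y + E t y := by rw [hFminv, one_mul]
      have hA2 : (t / τ) ^ (min lam b) * A τ v ≤ 0 := by
        have := mul_le_mul_of_nonneg_left hA0 hFm.le
        rwa [mul_zero] at this
      have hexp : (t / τ) ^ (min lam b) * (A τ v + B τ v + E τ v)
          = (t / τ) ^ (min lam b) * A τ v + (t / τ) ^ (min lam b) * B τ v
            + (t / τ) ^ (min lam b) * E τ v := by ring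
      have hgoal : (2:ℝ)⁻¹ * ((t / τ) ^ (min lam b) * (A τ v + B τ v + E τ v))
          ≤ A t y + B t y + E t y := by
        rw [hexp]
        linarith
      calc (2:ℝ)⁻¹ * (t / τ) ^ (min lam b) * (A τ v + B τ v + E τ v)
          = (2:ℝ)⁻¹ * ((t / τ) ^ (min lam b) * (A τ v + B τ v + E τ v)) := by ring
        _ ≤ A t y + B t y + E t y := hgoal

/-- Proposition 2: an evolution family admits a strong nonuniform polynomial dichotomy
iff it admits a polynomial dichotomy with respect to a family of norms satisfying both
`∥x∥ ≤ ∥x∥_t ≤ Ct^ε∥x∥` and the polynomial bounded growth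
`∥T(t,s)x∥_t ≤ M(t/s)^a∥x∥_s` for `t ≥ s ≥ 1`. -/
theorem stmt18 (T : ℝ → ℝ → X →L[ℝ] X) (hT : IsEvolutionFamily T) :
    StrongNonuniformPolyDichotomy T ↔
      ∃ N : ℝ → X → ℝ, ∃ C M a ε : ℝ, 0 < C ∧ 0 < M ∧ 0 < a ∧ 0 ≤ ε ∧
        IsNormFamily N C ε ∧
        (∀ s t : ℝ, 1 ≤ s → s ≤ t → ∀ x : X, N t (T t s x) ≤ M * (t / s) ^ a * N s x) ∧
        PolyDichotomyWrt T N := by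
  constructor
  · rintro ⟨⟨P, D, lam, ε₁, hD, hlam, hε₁, hPP, hPT, hbij, hS, hU⟩,
      K, b, ε₂, hK, hb, hε₂, hG⟩
    exact fwd_main T hT.1 hT.2.1 P D lam ε₁ hD hlam hε₁ hPP hPT hbij hS hU
      K b ε₂ hK hb hε₂ hG
  · rintro ⟨N, C, M, a, ε, hC, hM, ha, hε, ⟨hNadd, hNsmul, hNbd⟩, hGN,
      P, D, lam, hD, hlam, hPP, hPT, hbij, hSN, hUN⟩
    have hNnn : ∀ t : ℝ, 1 ≤ t → ∀ x : X, 0 ≤ N t x := fun t ht x =>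
      le_trans (norm_nonneg x) (hNbd t x ht).1
    constructor
    · refine ⟨P, D * C, lam, ε, mul_pos hD hC, hlam, hε, hPP, hPT, hbij, ?_, ?_⟩
      · intro τ t hτ ht x
        have h1t : (1:ℝ) ≤ t := le_trans hτ ht
        calc ‖T t τ (P τ x)‖ ≤ N t (T t τ (P τ x)) := (hNbd t _ h1t).1
          _ ≤ D * (t / τ) ^ (-lam) * N τ x := hSN τ t hτ ht x
          _ ≤ D * (t / τ) ^ (-lam) * (C * τ ^ ε * ‖x‖) := by
              have := (hNbd τ x hτ).2
              have h0 : (0:ℝ) ≤ D * (t / τ) ^ (-lam) := by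
                have hd : (0:ℝ) < t / τ :=
                  div_pos (lt_of_lt_of_le one_pos h1t) (lt_of_lt_of_le one_pos hτ)
                exact mul_nonneg hD.le (Real.rpow_nonneg hd.le _)
              exact mul_le_mul_of_nonneg_left this h0
          _ = D * C * (t / τ) ^ (-lam) * τ ^ ε * ‖x‖ := by ring
      · intro τ t hτ ht v hv
        have h1t : (1:ℝ) ≤ t := le_trans hτ ht
        have h1 := hUN τ t hτ ht v hv
        have h2 : N t (T t τ v) ≤ C * t ^ ε * ‖T t τ v‖ := (hNbd t _ h1t).2
        have h3 : ‖v‖ ≤ N τ v := (hNbd τ v hτ).1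
        have htpos : (0:ℝ) < t := lt_of_lt_of_le one_pos h1t
        have hd : (0:ℝ) < t / τ := div_pos htpos (lt_of_lt_of_le one_pos hτ)
        have hte : (0:ℝ) < t ^ ε := Real.rpow_pos_of_pos htpos ε
        have hte' : t ^ (-ε) = (t ^ ε)⁻¹ := Real.rpow_neg htpos.le ε
        have h4 : D⁻¹ * (t / τ) ^ lam * ‖v‖ ≤ C * t ^ ε * ‖T t τ v‖ := by
          calc D⁻¹ * (t / τ) ^ lam * ‖v‖ ≤ D⁻¹ * (t / τ) ^ lam * N τ v := by
                have h0 : (0:ℝ) ≤ D⁻¹ * (t / τ) ^ lam :=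
                  mul_nonneg (inv_nonneg.2 hD.le) (Real.rpow_nonneg hd.le _)
                exact mul_le_mul_of_nonneg_left h3 h0
            _ ≤ N t (T t τ v) := h1
            _ ≤ C * t ^ ε * ‖T t τ v‖ := h2
        calc (D * C)⁻¹ * (t / τ) ^ lam * t ^ (-ε) * ‖v‖
            = (C * t ^ ε)⁻¹ * (D⁻¹ * (t / τ) ^ lam * ‖v‖) := by
              rw [hte', mul_inv, mul_inv]; ring
          _ ≤ (C * t ^ ε)⁻¹ * (C * t ^ ε * ‖T t τ v‖) := by
              have h0 : (0:ℝ) ≤ (C * t ^ ε)⁻¹ := by positivity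
              exact mul_le_mul_of_nonneg_left h4 h0
          _ = ‖T t τ v‖ := by
              rw [inv_mul_cancel_left₀ (by positivity)]
    · refine ⟨M * C, a, ε, mul_pos hM hC, ha, hε, ?_⟩
      intro τ t hτ ht x
      have h1t : (1:ℝ) ≤ t := le_trans hτ ht
      have hd : (0:ℝ) < t / τ :=
        div_pos (lt_of_lt_of_le one_pos h1t) (lt_of_lt_of_le one_pos hτ)
      calc ‖T t τ x‖ ≤ N t (T t τ x) := (hNbd t _ h1t).1
        _ ≤ M * (t / τ) ^ a * N τ x := hGN τ t hτ ht x
        _ ≤ M * (t / τ) ^ a * (C * τ ^ ε * ‖x‖) := by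
            have h0 : (0:ℝ) ≤ M * (t / τ) ^ a :=
              mul_nonneg hM.le (Real.rpow_nonneg hd.le _)
            exact mul_le_mul_of_nonneg_left (hNbd τ x hτ).2 h0
        _ = M * C * (t / τ) ^ a * τ ^ ε * ‖x‖ := by ring
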